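/- For every integer n ≤ −4 there is no continuous function f : I → ℝ satisfying the discriminant condition (∗) for all u ∈ I and v ∈ ℝ; i.e. no principal curvature of Φ has the form f(u)·w(u,v)ⁿ with n ≤ −4. -/

import Mathlib

/-- for every integer `n ≤ -4` there is no continuous `f : I → ℝ`
satisfying the discriminant condition (∗); i.e. no principal curvature of `Φ`
has the form `f(u) w(u,v)ⁿ` with `n ≤ -4` (here `w u v = √(v² + δ u²)`). -/
theorem no_principal_curvature_n_le_neg_four
    (I : Set ℝ) (hIopen : IsOpen I) (hIconn : I.OrdConnected)
    (hIne : I.Nonempty)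
    (k δ δ' lam : ℝ → ℝ)
    (hk : ContinuousOn k I)
    (hδdiff : ∀ u ∈ I, HasDerivAt δ (δ' u) u)
    (hδ'cont : ContinuousOn δ' I)
    (hδ0 : ∀ u ∈ I, δ u ≠ 0)
    (hlam : ContinuousOn lam I)
    (n : ℤ) (hn : n ≤ -4) :
    ¬ ∃ f : ℝ → ℝ, ContinuousOn f I ∧
      ∀ u ∈ I, ∀ v : ℝ,
        f u ^ 2 * Real.sqrt (v ^ 2 + δ u ^ 2) ^ (2 * n + 4) +
          f u * (k u * v ^ 2 + δ' u * v + δ u ^ 2 * (k u + lam u)) *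
            Real.sqrt (v ^ 2 + δ u ^ 2) ^ (n + 1) - δ u ^ 2 = 0 := by
  rintro ⟨f, hfc, hf⟩
  obtain ⟨u, hu⟩ := hIne
  have hc : (0:ℝ) < δ u ^ 2 := pow_two_pos_of_ne_zero (hδ0 u hu)
  set c : ℝ := δ u ^ 2 with hcdef
  set A : ℝ := |k u| + |δ' u| + |δ u ^ 2 * (k u + lam u)| with hAdef
  have hA : 0 ≤ A := by positivity
  set B : ℝ := f u ^ 2 + |f u| * A with hBdef
  have hB : 0 ≤ B := by positivity
  set v : ℝ := max 1 (B / c + 1) with hvdef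
  have hv1 : (1:ℝ) ≤ v := le_max_left _ _
  have hv0 : (0:ℝ) < v := lt_of_lt_of_le one_pos hv1
  have hvB : B / c < v := lt_of_lt_of_le (lt_add_one _) (le_max_right _ _)
  have hBcv : B < c * v := by
    rw [mul_comm]; exact (div_lt_iff₀ hc).mp hvB
  set w : ℝ := Real.sqrt (v ^ 2 + δ u ^ 2) with hwdef
  have hvw : v ≤ w := by
    have h1 : v = Real.sqrt (v ^ 2) := by
      rw [Real.sqrt_sq hv0.le]
    rw [h1, hwdef]
    exact Real.sqrt_le_sqrt (by nlinarith)
  have hw1 : (1:ℝ) ≤ w := le_trans hv1 hvw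
  have hw0 : (0:ℝ) < w := lt_of_lt_of_le one_pos hw1
  -- bounds on the zpow terms
  have h1 : w ^ (2 * n + 4) ≤ v⁻¹ := by
    have ha : w ^ (2 * n + 4) ≤ w ^ (-1 : ℤ) :=
      zpow_le_zpow_right₀ hw1 (by omega)
    have hb : w ^ (-1 : ℤ) = w⁻¹ := by simp
    have hcmp : w⁻¹ ≤ v⁻¹ := by
      exact inv_anti₀ hv0 hvw
    calc w ^ (2 * n + 4) ≤ w ^ (-1 : ℤ) := ha
      _ = w⁻¹ := hb
      _ ≤ v⁻¹ := hcmp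
  have h2 : w ^ (n + 1) ≤ (v ^ 3)⁻¹ := by
    have ha : w ^ (n + 1) ≤ w ^ (-3 : ℤ) :=
      zpow_le_zpow_right₀ hw1 (by omega)
    have hb : w ^ (-3 : ℤ) = (w ^ 3)⁻¹ := by
      rw [zpow_neg]; norm_num [zpow_ofNat]
    have hcmp : (w ^ 3)⁻¹ ≤ (v ^ 3)⁻¹ := by
      apply inv_anti₀ (by positivity)
      exact pow_le_pow_left₀ hv0.le hvw 3
    calc w ^ (n + 1) ≤ w ^ (-3 : ℤ) := ha
      _ = (w ^ 3)⁻¹ := hb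
      _ ≤ (v ^ 3)⁻¹ := hcmp
  have hpos1 : (0:ℝ) < w ^ (2 * n + 4) := zpow_pos hw0 _
  have hpos2 : (0:ℝ) < w ^ (n + 1) := zpow_pos hw0 _
  -- bound on the quadratic Q
  set Q : ℝ := k u * v ^ 2 + δ' u * v + δ u ^ 2 * (k u + lam u) with hQdef
  have hQ : |Q| ≤ A * v ^ 2 := by
    have hvv : v ≤ v ^ 2 := by nlinarith
    have h12 : (1:ℝ) ≤ v ^ 2 := by nlinarith
    calc |Q| ≤ |k u * v ^ 2| + |δ' u * v| + |δ u ^ 2 * (k u + lam u)| := by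
          exact (abs_add_le _ _).trans (by gcongr; exact abs_add_le _ _)
      _ = |k u| * v ^ 2 + |δ' u| * |v| + |δ u ^ 2 * (k u + lam u)| := by
          rw [abs_mul, abs_mul, abs_of_nonneg (by positivity : (0:ℝ) ≤ v ^ 2)]
      _ ≤ |k u| * v ^ 2 + |δ' u| * v ^ 2 + |δ u ^ 2 * (k u + lam u)| * v ^ 2 := by
          gcongr
          · rw [abs_of_nonneg hv0.le]; exact hvv
          · nlinarith [abs_nonneg (δ u ^ 2 * (k u + lam u))]
      _ = A * v ^ 2 := by ring
  -- the key equation at (u, v)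
  have heq := hf u hu v
  rw [← hwdef, ← hQdef, ← hcdef] at heq
  have hterm1 : f u ^ 2 * w ^ (2 * n + 4) ≤ f u ^ 2 * v⁻¹ := by
    exact mul_le_mul_of_nonneg_left h1 (by positivity)
  have hterm2 : f u * Q * w ^ (n + 1) ≤ |f u| * A * v⁻¹ := by
    calc f u * Q * w ^ (n + 1) ≤ |f u * Q * w ^ (n + 1)| := le_abs_self _
      _ = |f u| * |Q| * w ^ (n + 1) := by
          rw [abs_mul, abs_mul, abs_of_pos hpos2]
      _ ≤ |f u| * (A * v ^ 2) * (v ^ 3)⁻¹ := by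
          apply mul_le_mul (mul_le_mul_of_nonneg_left hQ (abs_nonneg _)) h2
            hpos2.le (by positivity)
      _ = |f u| * A * (v ^ 2 * (v ^ 3)⁻¹) := by ring
      _ = |f u| * A * v⁻¹ := by
          congr 1
          field_simp
  -- derive the contradiction
  have hle : c ≤ B * v⁻¹ := by
    have : c = f u ^ 2 * w ^ (2 * n + 4) + f u * Q * w ^ (n + 1) := by linarith
    rw [this, hBdef]
    have := add_le_add hterm1 hterm2
    linarith [this]
  have hfin : B * v⁻¹ < c := by
    rw [mul_inv_lt_iff₀ hv0]
    linarith [hBcv]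
  linarith
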